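/- For every natural number L, the integral over [-1,1] of (P_L(t) - 1)/(1 - t) with respect to t equals -2·h(L), where h(L) = ∑_{k=1}^{L} 1/k is the L-th harmonic number (h(0) = 0). -/

import Mathlib

open Polynomial Finset

/-- The Legendre polynomial `P_L` via Rodrigues' formula. -/
noncomputable def legendreP (L : ℕ) (x : ℝ) : ℝ :=
  (1 / ((2 : ℝ) ^ L * (Nat.factorial L : ℝ))) *
    iteratedDeriv L (fun t : ℝ => (t ^ 2 - 1) ^ L) x

/-- The `L`-th harmonic number `h(L) = ∑_{k=1}^L 1/k`, with `h(0) = 0`. -/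
noncomputable def harmonicR (L : ℕ) : ℝ := ∑ k ∈ Finset.range L, 1 / ((k : ℝ) + 1)

/-- iterated derivative of polynomial eval -/
lemma iteratedDeriv_polyEval (n : ℕ) (p : ℝ[X]) :
    iteratedDeriv n (fun x : ℝ => p.eval x) = fun x => (derivative^[n] p).eval x := by
  induction n generalizing p with
  | zero => simp
  | succ n ih =>
    rw [iteratedDeriv_succ']
    have h : deriv (fun x : ℝ => p.eval x) = fun x => p.derivative.eval x :=
      funext fun x => Polynomial.deriv p
    rw [h, ih, Function.iterate_succ_apply]

lemma expand_pow (L : ℕ) :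
    (((X : ℝ[X]) ^ 2 - 1) ^ L) =
      ∑ j ∈ range (L + 1), ((L.choose j * 2 ^ j : ℕ) : ℝ[X]) * (X - 1) ^ (2 * L - j) := by
  have h0 : ((X : ℝ[X]) ^ 2 - 1) = 2 * (X - 1) + (X - 1) ^ 2 := by ring
  rw [h0, add_pow]
  refine sum_congr rfl fun j hj => ?_
  have hjL : j ≤ L := Nat.lt_succ_iff.mp (mem_range.mp hj)
  have e : (X - 1 : ℝ[X]) ^ j * ((X - 1) ^ 2) ^ (L - j) = (X - 1) ^ (2 * L - j) := by
    rw [← pow_mul, ← pow_add]; congr 1; omega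
  rw [mul_pow, ← e]
  push_cast
  ring

lemma deriv_expand (L : ℕ) :
    derivative^[L] (((X : ℝ[X]) ^ 2 - 1) ^ L) =
      ∑ j ∈ range (L + 1),
        ((L.choose j * 2 ^ j * (2 * L - j).descFactorial L : ℕ) : ℝ[X]) * (X - 1) ^ (L - j) := by
  rw [expand_pow, iterate_derivative_sum]
  refine sum_congr rfl fun j hj => ?_
  have hjL : j ≤ L := Nat.lt_succ_iff.mp (mem_range.mp hj)
  have hC : ((L.choose j * 2 ^ j : ℕ) : ℝ[X]) = C ((L.choose j * 2 ^ j : ℕ) : ℝ) := by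
    rw [← C_eq_natCast]
  rw [hC, iterate_derivative_C_mul]
  have h1 : (X - 1 : ℝ[X]) = X - C 1 := by simp
  rw [h1, iterate_derivative_X_sub_pow]
  have h2 : 2 * L - j - L = L - j := by omega
  rw [h2]
  rw [nsmul_eq_mul, C_eq_natCast]
  push_cast
  ring

noncomputable def cL (L k : ℕ) : ℝ := ((L.choose k * (L + k).choose k : ℕ) : ℝ) / 2 ^ k

lemma cL_zero (L : ℕ) : cL L 0 = 1 := by simp [cL]

lemma legendreP_eq_sum (L : ℕ) (x : ℝ) :
    legendreP L x = ∑ k ∈ range (L + 1), cL L k * (x - 1) ^ k := by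
  have hfun : (fun t : ℝ => (t ^ 2 - 1) ^ L) =
      fun t : ℝ => (((X : ℝ[X]) ^ 2 - 1) ^ L).eval t := by
    funext t; simp
  rw [legendreP, hfun, iteratedDeriv_polyEval, deriv_expand]
  have heval : (∑ j ∈ range (L + 1),
        ((L.choose j * 2 ^ j * (2 * L - j).descFactorial L : ℕ) : ℝ[X]) * (X - 1) ^ (L - j)).eval x
      = ∑ j ∈ range (L + 1),
        ((L.choose j * 2 ^ j * (2 * L - j).descFactorial L : ℕ) : ℝ) * (x - 1) ^ (L - j) := by
    simp [eval_finset_sum]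
  rw [show ((fun x : ℝ => eval x (∑ j ∈ range (L + 1),
    ((L.choose j * 2 ^ j * (2 * L - j).descFactorial L : ℕ) : ℝ[X]) * (X - 1) ^ (L - j))) x) = _ from heval,
    Finset.mul_sum]
  -- reflect the sum
  rw [← Finset.sum_range_reflect]
  refine sum_congr rfl fun k hk => ?_
  have hkL : k ≤ L := Nat.lt_succ_iff.mp (mem_range.mp hk)
  have h1 : L + 1 - 1 - k = L - k := by omega
  rw [h1]
  have h2 : 2 * L - (L - k) = L + k := by omega
  have h3 : L - (L - k) = k := by omega
  rw [h2, h3]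
  have h4 : L.choose (L - k) = L.choose k := Nat.choose_symm hkL
  have h5 : (L + k).descFactorial L = L.factorial * (L + k).choose L :=
    Nat.descFactorial_eq_factorial_mul_choose _ _
  have h6 : (L + k).choose L = (L + k).choose k := by
    have := Nat.choose_symm (n := L + k) (k := k) (Nat.le_add_left _ _)
    simpa using this
  rw [h4, h5, h6]
  rw [cL]
  have hfac : (Nat.factorial L : ℝ) ≠ 0 := by positivity
  have hpow : (2 : ℝ) ^ (L - k) * 2 ^ k = 2 ^ L := by
    rw [← pow_add]; congr 1; omega
  have h2L : ((2:ℝ) ^ L * (Nat.factorial L : ℝ)) ≠ 0 := by positivity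
  field_simp
  push_cast
  rw [← hpow]
  ring

lemma integrand_eq (L : ℕ) (t : ℝ) (ht : t ≠ 1) :
    (legendreP L t - 1) / (1 - t) = -∑ k ∈ range L, cL L (k + 1) * (t - 1) ^ k := by
  rw [legendreP_eq_sum, Finset.sum_range_succ']
  have h0 : cL L 0 * (t - 1) ^ 0 = 1 := by simp [cL_zero]
  rw [h0]
  have hne : (1 : ℝ) - t ≠ 0 := by intro h; apply ht; linarith
  have hnum : (∑ k ∈ range L, cL L (k + 1) * (t - 1) ^ (k + 1)) + 1 - 1
      = (t - 1) * ∑ k ∈ range L, cL L (k + 1) * (t - 1) ^ k := by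
    rw [Finset.mul_sum]
    rw [add_sub_cancel_right]
    exact sum_congr rfl fun k _ => by ring
  rw [hnum]
  field_simp
  ring

lemma integral_step (L : ℕ) :
    ∫ t in (-1:ℝ)..1, (legendreP L t - 1) / (1 - t)
      = ∑ k ∈ range L, cL L (k + 1) * ((-2 : ℝ) ^ (k + 1) / (k + 1)) := by
  have hae : ∀ᵐ t ∂(MeasureTheory.volume : MeasureTheory.Measure ℝ),
      t ∈ Set.uIoc (-1 : ℝ) 1 →
        (legendreP L t - 1) / (1 - t) = -∑ k ∈ range L, cL L (k + 1) * (t - 1) ^ k := by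
    have h1 : ∀ᵐ t ∂(MeasureTheory.volume : MeasureTheory.Measure ℝ), t ≠ 1 := by
      rw [MeasureTheory.ae_iff]
      have : {t : ℝ | ¬ t ≠ 1} = {1} := by ext t; simp
      rw [this]
      exact MeasureTheory.measure_singleton 1
    filter_upwards [h1] with t ht _
    exact integrand_eq L t ht
  rw [intervalIntegral.integral_congr_ae hae]
  have hint : ∀ k ∈ range L, IntervalIntegrable
      (fun t : ℝ => cL L (k + 1) * (t - 1) ^ k) MeasureTheory.volume (-1 : ℝ) 1 :=
    fun k _ => (Continuous.intervalIntegrable (by continuity) _ _)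
  rw [intervalIntegral.integral_neg, intervalIntegral.integral_finset_sum hint]
  rw [← Finset.sum_neg_distrib]
  refine sum_congr rfl fun k hk => ?_
  rw [intervalIntegral.integral_const_mul]
  have hcomp : (∫ t in (-1:ℝ)..1, (t - 1) ^ k)
      = ∫ x in (-1 - 1 : ℝ)..(1 - 1 : ℝ), x ^ k :=
    intervalIntegral.integral_comp_sub_right (fun x : ℝ => x ^ k) 1
  rw [hcomp]
  norm_num [integral_pow]
  ring

lemma alt_sum (n : ℕ) :
    ∑ k ∈ range (n + 1), (-1 : ℝ) ^ k * (((n + 1).choose (k + 1) : ℕ) : ℝ) = 1 := by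
  have h := Int.alternating_sum_range_choose_of_ne (n := n + 1) (by omega)
  rw [Finset.sum_range_succ'] at h
  have h2 : ∑ k ∈ range (n + 1), (-1 : ℤ) ^ k * (((n + 1).choose (k + 1) : ℕ) : ℤ) = 1 := by
    have e : ∀ k ∈ range (n + 1),
        (-1 : ℤ) ^ (k + 1) * (((n + 1).choose (k + 1) : ℕ) : ℤ)
          = -((-1 : ℤ) ^ k * (((n + 1).choose (k + 1) : ℕ) : ℤ)) := by
      intro k _; ring
    rw [sum_congr rfl e, Finset.sum_neg_distrib] at h
    simp at h
    linarith
  exact_mod_cast h2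

lemma idH (L : ℕ) :
    ∑ k ∈ range L, (-1 : ℝ) ^ k * ((L.choose (k + 1) : ℕ) : ℝ) / ((k : ℝ) + 1)
      = ∑ k ∈ range L, 1 / ((k : ℝ) + 1) := by
  induction L with
  | zero => simp
  | succ L ih =>
    have hsplit : ∀ k ∈ range (L + 1),
        (-1 : ℝ) ^ k * (((L + 1).choose (k + 1) : ℕ) : ℝ) / ((k : ℝ) + 1)
          = (-1 : ℝ) ^ k * ((L.choose (k + 1) : ℕ) : ℝ) / ((k : ℝ) + 1)
            + (-1 : ℝ) ^ k * ((L.choose k : ℕ) : ℝ) / ((k : ℝ) + 1) := by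
      intro k _
      rw [Nat.choose_succ_succ]
      push_cast
      ring
    rw [sum_congr rfl hsplit, Finset.sum_add_distrib]
    have h1 : ∑ k ∈ range (L + 1), (-1 : ℝ) ^ k * ((L.choose (k + 1) : ℕ) : ℝ) / ((k : ℝ) + 1)
        = ∑ k ∈ range L, (-1 : ℝ) ^ k * ((L.choose (k + 1) : ℕ) : ℝ) / ((k : ℝ) + 1) := by
      rw [Finset.sum_range_succ]
      simp [Nat.choose_succ_self]
    have h2 : ∀ k ∈ range (L + 1),
        (-1 : ℝ) ^ k * ((L.choose k : ℕ) : ℝ) / ((k : ℝ) + 1)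
          = (1 / ((L : ℝ) + 1)) * ((-1 : ℝ) ^ k * (((L + 1).choose (k + 1) : ℕ) : ℝ)) := by
      intro k _
      have hnat := Nat.add_one_mul_choose_eq L k
      have hr : ((L : ℝ) + 1) * ((L.choose k : ℕ) : ℝ)
          = (((L + 1).choose (k + 1) : ℕ) : ℝ) * ((k : ℝ) + 1) := by exact_mod_cast hnat
      have hk0 : ((k : ℝ) + 1) ≠ 0 := by positivity
      have hL0 : ((L : ℝ) + 1) ≠ 0 := by positivity
      field_simp
      linear_combination hr
    rw [sum_congr rfl h2, ← Finset.mul_sum, alt_sum, h1, ih, Finset.sum_range_succ]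
    push_cast
    ring

lemma idB (i : ℕ) : ∀ L, i < L →
    ∑ k ∈ Finset.Ico i L, (-1 : ℤ) ^ k * ((L.choose (k + 1) * k.choose i : ℕ) : ℤ)
      = (-1) ^ i := by
  refine Nat.le_induction ?_ ?_
  · rw [Finset.sum_Ico_eq_sum_range]
    simp
  · intro L hL ih
    have hiL : i ≤ L := by omega
    have hsplit : ∀ k ∈ Finset.Ico i (L + 1),
        (-1 : ℤ) ^ k * (((L + 1).choose (k + 1) * k.choose i : ℕ) : ℤ)
          = (-1 : ℤ) ^ k * ((L.choose (k + 1) * k.choose i : ℕ) : ℤ)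
            + (-1 : ℤ) ^ k * ((L.choose k * k.choose i : ℕ) : ℤ) := by
      intro k _
      rw [Nat.choose_succ_succ]
      push_cast
      ring
    rw [sum_congr rfl hsplit, Finset.sum_add_distrib]
    have h1 : ∑ k ∈ Finset.Ico i (L + 1), (-1 : ℤ) ^ k * ((L.choose (k + 1) * k.choose i : ℕ) : ℤ)
        = (-1) ^ i := by
      rw [Finset.sum_Ico_succ_top hiL]
      simp [Nat.choose_succ_self]
      push_cast at ih ⊢
      exact ih
    have h2 : ∑ k ∈ Finset.Ico i (L + 1), (-1 : ℤ) ^ k * ((L.choose k * k.choose i : ℕ) : ℤ)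
        = 0 := by
      have hterm : ∀ k ∈ Finset.Ico i (L + 1),
          (-1 : ℤ) ^ k * ((L.choose k * k.choose i : ℕ) : ℤ)
            = (-1 : ℤ) ^ k * ((L.choose i * (L - i).choose (k - i) : ℕ) : ℤ) := by
        intro k hk
        rw [Finset.mem_Ico] at hk
        rw [Nat.choose_mul hk.1]
      rw [sum_congr rfl hterm, Finset.sum_Ico_eq_sum_range]
      have hre : ∀ j ∈ range (L + 1 - i),
          (-1 : ℤ) ^ (i + j) * ((L.choose i * (L - i).choose (i + j - i) : ℕ) : ℤ)
            = ((-1 : ℤ) ^ i * (L.choose i : ℤ)) * ((-1 : ℤ) ^ j * ((L - i).choose j : ℤ)) := by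
        intro j _
        have : i + j - i = j := by omega
        rw [this]
        push_cast
        ring
      rw [sum_congr rfl hre, ← Finset.mul_sum]
      have hn : L + 1 - i = (L - i) + 1 := by omega
      rw [hn, Int.alternating_sum_range_choose_of_ne (by omega : L - i ≠ 0), mul_zero]
    rw [h1, h2, add_zero]

lemma sum_swap_tri (L : ℕ) (F : ℕ → ℕ → ℝ) :
    ∑ k ∈ range L, ∑ i ∈ range (k + 1), F i k
      = ∑ i ∈ range L, ∑ k ∈ Finset.Ico i L, F i k := by
  have h1 : ∀ k ∈ range L, ∑ i ∈ range (k + 1), F i k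
      = ∑ i ∈ range L, if i ≤ k then F i k else 0 := by
    intro k hk
    rw [mem_range] at hk
    rw [← Finset.sum_filter]
    apply Finset.sum_congr _ (fun _ _ => rfl)
    ext j
    simp only [Finset.mem_range, Finset.mem_filter]
    omega
  rw [sum_congr rfl h1, Finset.sum_comm]
  refine sum_congr rfl fun i _ => ?_
  rw [← Finset.sum_filter]
  apply Finset.sum_congr _ (fun _ _ => rfl)
  ext j
  simp only [Finset.mem_range, Finset.mem_filter, Finset.mem_Ico]
  omega

lemma vandermonde_real (L k : ℕ) :
    (((L + (k + 1)).choose (k + 1) : ℕ) : ℝ)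
      = ∑ i ∈ range (k + 2), ((L.choose i : ℕ) : ℝ) * (((k + 1).choose i : ℕ) : ℝ) := by
  have h := Nat.add_choose_eq L (k + 1) (k + 1)
  rw [Finset.Nat.sum_antidiagonal_eq_sum_range_succ_mk] at h
  have h2 : ∀ i ∈ range (k + 2), L.choose i * (k + 1).choose (k + 1 - i)
      = L.choose i * (k + 1).choose i := by
    intro i hi
    rw [mem_range] at hi
    have : (k + 1).choose (k + 1 - i) = (k + 1).choose i := Nat.choose_symm (by omega)
    rw [this]
  rw [sum_congr rfl h2] at h
  rw [h]
  push_cast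
  rfl

lemma choose_div_eq (k i : ℕ) :
    (((k + 1).choose (i + 1) : ℕ) : ℝ) / ((k : ℝ) + 1)
      = ((k.choose i : ℕ) : ℝ) / ((i : ℝ) + 1) := by
  have hnat := Nat.add_one_mul_choose_eq k i
  rw [div_eq_div_iff (by positivity) (by positivity)]
  have : ((k : ℝ) + 1) * ((k.choose i : ℕ) : ℝ)
      = (((k + 1).choose (i + 1) : ℕ) : ℝ) * ((i : ℝ) + 1) := by exact_mod_cast hnat
  linarith

lemma key_sum (L : ℕ) :
    ∑ k ∈ range L, (-1 : ℝ) ^ (k + 1)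
        * ((L.choose (k + 1) * (L + (k + 1)).choose (k + 1) : ℕ) : ℝ) / ((k : ℝ) + 1)
      = -2 * ∑ k ∈ range L, 1 / ((k : ℝ) + 1) := by
  have hterm : ∀ k ∈ range L,
      (-1 : ℝ) ^ (k + 1)
          * ((L.choose (k + 1) * (L + (k + 1)).choose (k + 1) : ℕ) : ℝ) / ((k : ℝ) + 1)
        = (∑ i ∈ range (k + 1),
            (-1 : ℝ) ^ (k + 1) * ((L.choose (k + 1) * k.choose i : ℕ) : ℝ)
              * ((L.choose (i + 1) : ℕ) : ℝ) / ((i : ℝ) + 1))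
          + (-(-1 : ℝ) ^ k * ((L.choose (k + 1) : ℕ) : ℝ) / ((k : ℝ) + 1)) := by
    intro k _
    rw [show ((L.choose (k + 1) * (L + (k + 1)).choose (k + 1) : ℕ) : ℝ)
        = ((L.choose (k + 1) : ℕ) : ℝ) * (((L + (k + 1)).choose (k + 1) : ℕ) : ℝ) by push_cast; rfl]
    rw [vandermonde_real, Finset.mul_sum, Finset.mul_sum, Finset.sum_div,
      Finset.sum_range_succ']
    congr 1
    · refine sum_congr rfl fun i _ => ?_
      have h1 : (-1 : ℝ) ^ (k + 1) * (((L.choose (k + 1) : ℕ) : ℝ)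
            * (((L.choose (i + 1) : ℕ) : ℝ) * (((k + 1).choose (i + 1) : ℕ) : ℝ))) / ((k : ℝ) + 1)
          = ((-1 : ℝ) ^ (k + 1) * ((L.choose (k + 1) : ℕ) : ℝ) * ((L.choose (i + 1) : ℕ) : ℝ))
              * ((((k + 1).choose (i + 1) : ℕ) : ℝ) / ((k : ℝ) + 1)) := by ring
      rw [h1, choose_div_eq]
      push_cast
      ring
    · simp
      ring
  rw [sum_congr rfl hterm, Finset.sum_add_distrib]
  have hA : ∑ k ∈ range L, (-(-1 : ℝ) ^ k * ((L.choose (k + 1) : ℕ) : ℝ) / ((k : ℝ) + 1))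
      = -∑ k ∈ range L, 1 / ((k : ℝ) + 1) := by
    rw [← idH L, ← Finset.sum_neg_distrib]
    exact sum_congr rfl fun k _ => by ring
  have hB : ∑ k ∈ range L, ∑ i ∈ range (k + 1),
        (-1 : ℝ) ^ (k + 1) * ((L.choose (k + 1) * k.choose i : ℕ) : ℝ)
          * ((L.choose (i + 1) : ℕ) : ℝ) / ((i : ℝ) + 1)
      = -∑ k ∈ range L, 1 / ((k : ℝ) + 1) := by
    rw [sum_swap_tri]
    have hinner : ∀ i ∈ range L,
        ∑ k ∈ Finset.Ico i L,
            (-1 : ℝ) ^ (k + 1) * ((L.choose (k + 1) * k.choose i : ℕ) : ℝ)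
              * ((L.choose (i + 1) : ℕ) : ℝ) / ((i : ℝ) + 1)
          = -(-1 : ℝ) ^ i * ((L.choose (i + 1) : ℕ) : ℝ) / ((i : ℝ) + 1) := by
      intro i hi
      rw [mem_range] at hi
      have hIB : ∑ k ∈ Finset.Ico i L,
          (-1 : ℝ) ^ k * ((L.choose (k + 1) * k.choose i : ℕ) : ℝ) = (-1) ^ i := by
        exact_mod_cast congrArg (Int.cast : ℤ → ℝ) (idB i L hi)
      calc ∑ k ∈ Finset.Ico i L,
            (-1 : ℝ) ^ (k + 1) * ((L.choose (k + 1) * k.choose i : ℕ) : ℝ)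
              * ((L.choose (i + 1) : ℕ) : ℝ) / ((i : ℝ) + 1)
          = ∑ k ∈ Finset.Ico i L,
              ((-1 : ℝ) ^ k * ((L.choose (k + 1) * k.choose i : ℕ) : ℝ))
                * (-((L.choose (i + 1) : ℕ) : ℝ) / ((i : ℝ) + 1)) := by
            exact sum_congr rfl fun k _ => by ring
        _ = (-1 : ℝ) ^ i * (-((L.choose (i + 1) : ℕ) : ℝ) / ((i : ℝ) + 1)) := by
            rw [← Finset.sum_mul, hIB]
        _ = -(-1 : ℝ) ^ i * ((L.choose (i + 1) : ℕ) : ℝ) / ((i : ℝ) + 1) := by ring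
    rw [sum_congr rfl hinner, ← idH L, ← Finset.sum_neg_distrib]
    exact sum_congr rfl fun i _ => by ring
  rw [hA, hB]
  ring

/-- For every natural number `L`,
`∫_{-1}^{1} (P_L(t) - 1)/(1 - t) dt = -2 h(L)`. -/
theorem legendre_integral_eq_neg_two_harmonic (L : ℕ) :
    ∫ t in (-1 : ℝ)..1, (legendreP L t - 1) / (1 - t) = -2 * harmonicR L := by
  rw [integral_step, harmonicR]
  have hterm : ∀ k ∈ range L, cL L (k + 1) * ((-2 : ℝ) ^ (k + 1) / ((k : ℝ) + 1))
      = (-1 : ℝ) ^ (k + 1)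
          * ((L.choose (k + 1) * (L + (k + 1)).choose (k + 1) : ℕ) : ℝ) / ((k : ℝ) + 1) := by
    intro k _
    rw [cL, neg_pow]
    have h2 : (2 : ℝ) ^ (k + 1) ≠ 0 := by positivity
    field_simp
  rw [sum_congr rfl hterm, key_sum]
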